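/- (Upper bound on minimum distance via embedded boxes) Let $P \subset \mathbb{Z}_{\geq 0}^r$ be a finite set of exponent vectors, $\overline{P}$ its componentwise reduction mod $q-1$ into $\{0,\ldots,q-2\}^r$, and suppose there exist $u \in \mathbb{Z}^r$ and integers $0 \leq l_i \leq q-2$ such that the reduction mod $q-1$ of $u + (\{0,\ldots,l_1\} \times \cdots \times \{0,\ldots,l_r\})$ is contained in $\overline{P}$. Then the minimum distance $d$ of the toric code $\mathcal{C}_P$ satisfies $d \leq (q-1)^r - \sum_{j=1}^{r} (-1)^{j+1} \sum_{i_1 < \cdots < i_j} l_{i_1} \cdots l_{i_j} (q-1)^{r-j}$. -/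

import Mathlib

open Finset

private lemma zpow_congr_card' {G : Type*} [Group G] [Fintype G] (x : G) {a b : ℤ}
    (h : a % (Fintype.card G : ℤ) = b % (Fintype.card G : ℤ)) : x ^ a = x ^ b := by
  obtain ⟨k, hk⟩ : ((Fintype.card G : ℤ)) ∣ b - a := Int.ModEq.dvd h
  have hb : b = a + (Fintype.card G : ℤ) * k := by linarith
  rw [hb, zpow_add, zpow_mul, zpow_natCast, pow_card_eq_one, one_zpow, mul_one]

private lemma prod_sub_expand' {r : ℕ} (x : ℤ) (ll : Fin r → ℤ) :
    ∏ i, (x - ll i) = x ^ r - ∑ j ∈ Finset.Icc 1 r, (-1 : ℤ) ^ (j + 1) *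
      ∑ s ∈ Finset.powersetCard j (Finset.univ : Finset (Fin r)),
        (∏ i ∈ s, ll i) * x ^ (r - j) := by
  have h1 : ∀ i : Fin r, x - ll i = (- ll i) + x := fun i => by ring
  simp only [h1]
  rw [Finset.prod_add, Finset.sum_powerset]
  have hins : Finset.range ((Finset.univ : Finset (Fin r)).card + 1)
      = insert 0 (Finset.Icc 1 r) := by
    ext j; simp [Finset.card_univ]; omega
  rw [hins, Finset.sum_insert (by simp)]
  rw [Finset.powersetCard_zero]
  have h0 : ∑ t ∈ ({∅} : Finset (Finset (Fin r))), (∏ i ∈ t, (- ll i)) * ∏ i ∈ univ \ t, x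
      = x ^ r := by
    simp [Finset.prod_const, Finset.card_univ]
  rw [h0]
  have h2 : ∀ j ∈ Finset.Icc 1 r,
      ∑ t ∈ Finset.powersetCard j (univ : Finset (Fin r)),
        (∏ i ∈ t, (- ll i)) * ∏ i ∈ univ \ t, x
      = -((-1 : ℤ) ^ (j + 1) * ∑ s ∈ Finset.powersetCard j (univ : Finset (Fin r)),
          (∏ i ∈ s, ll i) * x ^ (r - j)) := by
    intro j hj
    rw [← neg_mul, show (-(-1:ℤ)^(j+1)) = (-1:ℤ)^j from by rw [pow_succ]; ring,
      Finset.mul_sum]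
    refine Finset.sum_congr rfl fun t ht => ?_
    have htc : t.card = j := (Finset.mem_powersetCard.mp ht).2
    have hsd : (univ \ t).card = r - j := by
      rw [Finset.card_sdiff_of_subset (Finset.subset_univ t), Finset.card_univ, htc, Fintype.card_fin]
    have hneg : ∏ i ∈ t, -ll i = (-1:ℤ)^j * ∏ i ∈ t, ll i := by
      rw [← htc, ← Finset.prod_const (-1:ℤ), ← Finset.prod_mul_distrib]
      simp
    rw [hneg, Finset.prod_const, hsd]
    ring
  rw [Finset.sum_congr rfl h2]
  simp only [Finset.sum_neg_distrib]
  ring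

/-- Upper bound on the minimum distance of a toric code via an embedded box:
if the reduction mod `q-1` of the box `u + ∏ {0,…,l_i}` is contained in the reduction
of `P`, then there is a nonzero codeword of weight at most
`(q-1)^r - ∑_{j=1}^r (-1)^{j+1} ∑_{i₁<⋯<i_j} l_{i₁}⋯l_{i_j}(q-1)^{r-j}`. -/
theorem toric_code_minimum_distance_upper_bound {F : Type*} [Field F] [Fintype F]
    [DecidableEq F] {r : ℕ} (hr : 1 ≤ r) (P : Finset (Fin r → ℕ))
    (u : Fin r → ℤ) (l : Fin r → ℕ) (hl : ∀ i, l i ≤ Fintype.card F - 2)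
    (hbox : ∀ v : Fin r → ℕ, (∀ i, v i ≤ l i) →
      (fun i => (u i + v i) % ((Fintype.card F : ℤ) - 1)) ∈
        P.image (fun w => fun i => ((w i : ℤ)) % ((Fintype.card F : ℤ) - 1))) :
    ∃ c ∈ Submodule.span F
        ((fun w : Fin r → ℕ => fun t : Fin r → Fˣ => ∏ i, ((t i : F)) ^ (w i)) '' P),
      c ≠ 0 ∧ (hammingNorm c : ℤ) ≤ ((Fintype.card F : ℤ) - 1) ^ r -
        ∑ j ∈ Finset.Icc 1 r, (-1 : ℤ) ^ (j + 1) *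
          ∑ s ∈ Finset.powersetCard j (Finset.univ : Finset (Fin r)),
            (∏ i ∈ s, (l i : ℤ)) * ((Fintype.card F : ℤ) - 1) ^ (r - j) := by
  classical
  have hq2 : 2 ≤ Fintype.card F := Fintype.one_lt_card
  have hcard : Fintype.card Fˣ = Fintype.card F - 1 := Fintype.card_units F
  have hcardZ : ((Fintype.card Fˣ : ℕ) : ℤ) = (Fintype.card F : ℤ) - 1 := by
    rw [hcard, Nat.cast_sub (by omega : 1 ≤ Fintype.card F)]; norm_num
  -- choose subsets S i of Fˣ with card l i
  have hSex : ∀ i, ∃ S : Finset Fˣ, S ⊆ Finset.univ ∧ S.card = l i := by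
    intro i
    refine Finset.exists_subset_card_eq ?_
    rw [Finset.card_univ, hcard]
    have := hl i; omega
  choose S _ hScard using hSex
  -- the codeword
  set c : (Fin r → Fˣ) → F := fun t =>
    (∏ i, (((t i) ^ (u i) : Fˣ) : F)) * ∏ i, ∏ a ∈ S i, ((t i : F) - (a : F)) with hc
  -- support characterization
  have hsupp : ∀ t, c t ≠ 0 ↔ ∀ i, t i ∉ S i := by
    intro t
    rw [hc]
    constructor
    · intro h i hi
      exfalso; apply h
      apply mul_eq_zero_of_right
      refine Finset.prod_eq_zero (Finset.mem_univ i) ?_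
      exact Finset.prod_eq_zero hi (by simp)
    · intro h
      apply mul_ne_zero
      · exact Finset.prod_ne_zero_iff.mpr fun i _ => Units.ne_zero _
      · refine Finset.prod_ne_zero_iff.mpr fun i _ =>
          Finset.prod_ne_zero_iff.mpr fun a ha => ?_
        refine sub_ne_zero.mpr fun he => h i ?_
        have : t i = a := Units.ext he
        rwa [this]
  refine ⟨c, ?_, ?_, ?_⟩
  · -- membership in the span
    have hexp : c = ∑ p ∈ Fintype.piFinset (fun i => (S i).powerset),
        (∏ i, ∏ a ∈ (S i) \ (p i), (-(a : F))) •
          (fun t : Fin r → Fˣ => ∏ i, (((t i) ^ (u i + ((p i).card : ℤ)) : Fˣ) : F)) := by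
      funext t
      rw [Finset.sum_apply]
      simp only [Pi.smul_apply, smul_eq_mul]
      have h1 : ∀ i, ∏ a ∈ S i, ((t i : F) - (a : F))
          = ∑ A ∈ (S i).powerset, ((t i : F)) ^ A.card * ∏ a ∈ (S i) \ A, (-(a : F)) := by
        intro i
        have hpa := Finset.prod_add (fun _ : Fˣ => (t i : F)) (fun a : Fˣ => -(a : F)) (S i)
        simp only [sub_eq_add_neg]
        rw [hpa]
        exact Finset.sum_congr rfl fun A _ => by rw [Finset.prod_const]
      calc c t = ∏ i, ((((t i) ^ (u i) : Fˣ) : F) *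
            ∑ A ∈ (S i).powerset, ((t i : F)) ^ A.card * ∏ a ∈ (S i) \ A, (-(a : F))) := by
              rw [hc]; simp only [← Finset.prod_mul_distrib]
              exact Finset.prod_congr rfl fun i _ => by rw [h1 i]
        _ = ∏ i, ∑ A ∈ (S i).powerset,
              (((t i) ^ (u i) : Fˣ) : F) *
                (((t i : F)) ^ A.card * ∏ a ∈ (S i) \ A, (-(a : F))) :=
              Finset.prod_congr rfl fun i _ => by rw [Finset.mul_sum]
        _ = ∑ p ∈ Fintype.piFinset (fun i => (S i).powerset),
              ∏ i, (((t i) ^ (u i) : Fˣ) : F) *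
                (((t i : F)) ^ (p i).card * ∏ a ∈ (S i) \ (p i), (-(a : F))) := by
              rw [Finset.prod_univ_sum]
        _ = ∑ p ∈ Fintype.piFinset (fun i => (S i).powerset),
              (∏ i, ∏ a ∈ (S i) \ (p i), (-(a : F))) *
                ∏ i, (((t i) ^ (u i + ((p i).card : ℤ)) : Fˣ) : F) := by
              refine Finset.sum_congr rfl fun p _ => ?_
              rw [← Finset.prod_mul_distrib]
              refine Finset.prod_congr rfl fun i _ => ?_
              rw [zpow_add, Units.val_mul, zpow_natCast, Units.val_pow_eq_pow_val]
              ring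
    rw [hexp]
    refine Submodule.sum_mem _ fun p hp => Submodule.smul_mem _ _ ?_
    have hple : ∀ i, (p i).card ≤ l i := by
      intro i
      have hpi := (Fintype.mem_piFinset.mp hp) i
      exact le_trans (Finset.card_le_card (Finset.mem_powerset.mp hpi)) (le_of_eq (hScard i))
    obtain ⟨w, hwP, hw⟩ := Finset.mem_image.mp (hbox (fun i => (p i).card) hple)
    have hfn : (fun t : Fin r → Fˣ => ∏ i, (((t i) ^ (u i + ((p i).card : ℤ)) : Fˣ) : F))
        = (fun t : Fin r → Fˣ => ∏ i, ((t i : F)) ^ (w i)) := by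
      funext t
      refine Finset.prod_congr rfl fun i _ => ?_
      have hcong := congrFun hw i
      have hz : (t i) ^ (u i + ((p i).card : ℤ)) = (t i) ^ ((w i : ℕ) : ℤ) := by
        apply zpow_congr_card'
        rw [hcardZ]
        exact hcong.symm
      rw [hz, zpow_natCast, Units.val_pow_eq_pow_val]
    rw [hfn]
    exact Submodule.subset_span ⟨w, hwP, rfl⟩
  · -- nonzero
    have hne : ∀ i, (Finset.univ \ S i).Nonempty := by
      intro i
      rw [← Finset.card_pos, Finset.card_sdiff_of_subset (Finset.subset_univ _), Finset.card_univ,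
        hcard, hScard]
      have := hl i; omega
    set t₀ : Fin r → Fˣ := fun i => (hne i).choose with ht₀
    have ht₀mem : ∀ i, t₀ i ∉ S i := by
      intro i
      have := (hne i).choose_spec
      rw [Finset.mem_sdiff] at this
      exact this.2
    intro h0
    exact ((hsupp t₀).mpr ht₀mem) (by rw [h0]; rfl)
  · -- the weight bound
    have hnorm : hammingNorm c = (Fintype.piFinset fun i => Finset.univ \ S i).card := by
      unfold hammingNorm
      congr 1
      ext t
      simp only [Finset.mem_filter, Finset.mem_univ, true_and, Fintype.mem_piFinset,
        Finset.mem_sdiff]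
      rw [hsupp t]
    rw [hnorm, Fintype.card_piFinset,
      ← prod_sub_expand' ((Fintype.card F : ℤ) - 1) (fun i => (l i : ℤ)), Nat.cast_prod]
    apply le_of_eq
    refine Finset.prod_congr rfl fun i _ => ?_
    rw [Finset.card_sdiff_of_subset (Finset.subset_univ _), Finset.card_univ, hScard]
    have hle : l i ≤ Fintype.card Fˣ := by rw [hcard]; have := hl i; omega
    rw [Nat.cast_sub hle, hcardZ]
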